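/- Every positive-definite Hermitian 2×2 complex matrix h with det h = 1 can be written as h = exp(v₁σ₁ + v₂σ₂ + v₃σ₃) for some real numbers v₁, v₂, v₃, where σ₁, σ₂, σ₃ are the Pauli matrices; explicitly, h = cosh|v|·I + (sinh|v|/|v|)(v₁σ₁ + v₂σ₂ + v₃σ₃) when v ≠ 0. -/

import Mathlib

open scoped ComplexOrder
open Matrix

/-- The Pauli matrices σ₁, σ₂, σ₃. -/
noncomputable def pauli : Fin 3 → Matrix (Fin 2) (Fin 2) ℂ
  | 0 => !![0, 1; 1, 0]
  | 1 => !![0, -Complex.I; Complex.I, 0]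
  | 2 => !![1, 0; 0, -1]

/-- The Euclidean norm of (v₁, v₂, v₃). -/
noncomputable def vnorm (v : Fin 3 → ℝ) : ℝ := Real.sqrt (v 0 ^ 2 + v 1 ^ 2 + v 2 ^ 2)

lemma exp_of_sq (N : Matrix (Fin 2) (Fin 2) ℂ) (c : ℂ) (hc : c ≠ 0)
    (hN : N ^ 2 = c ^ 2 • 1) :
    NormedSpace.exp N = Complex.cosh c • 1 + (Complex.sinh c / c) • N := by
  rw [NormedSpace.exp_eq_tsum (𝕂 := ℂ)]
  refine HasSum.tsum_eq ?_
  have hpow : ∀ n : ℕ, N ^ (2 * n) = c ^ (2 * n) • (1 : Matrix (Fin 2) (Fin 2) ℂ) := by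
    intro n
    rw [pow_mul, hN, smul_pow, one_pow, ← pow_mul]
  refine HasSum.even_add_odd ?_ ?_
  · have := (Complex.hasSum_cosh c).smul_const (1 : Matrix (Fin 2) (Fin 2) ℂ)
    convert this using 2 with n
    · rfl
    rw [hpow, smul_smul, div_eq_inv_mul]
  · have := ((Complex.hasSum_sinh c).div_const c).smul_const N
    convert this using 2 with n
    · rfl
    rw [pow_succ, hpow, smul_mul_assoc, one_mul, smul_smul]
    congr 1
    rw [pow_succ, mul_div_assoc, mul_div_assoc, div_div_cancel_left' hc]
    exact mul_comm _ _

lemma pauli_sum (w : Fin 3 → ℝ) :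
    ∑ a, (w a : ℂ) • pauli a =
      !![(w 2 : ℂ), (w 0 : ℂ) - (w 1 : ℂ) * Complex.I;
         (w 0 : ℂ) + (w 1 : ℂ) * Complex.I, -(w 2 : ℂ)] := by
  simp only [Fin.sum_univ_three, pauli]
  ext i j
  fin_cases i <;> fin_cases j <;>
    simp [Matrix.smul_apply] <;> ring

lemma pauli_sum_sq (w : Fin 3 → ℝ) :
    (∑ a, (w a : ℂ) • pauli a) ^ 2 =
      ((w 0 ^ 2 + w 1 ^ 2 + w 2 ^ 2 : ℝ) : ℂ) • 1 := by
  rw [pauli_sum, pow_two]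
  ext i j
  fin_cases i <;> fin_cases j <;>
    simp [Matrix.mul_apply, Fin.sum_univ_two, Matrix.one_apply, Complex.ext_iff] <;>
    push_cast <;> ring_nf <;> norm_num <;> constructor <;>
    simp [← Complex.ofReal_pow] <;> ring

set_option maxHeartbeats 1000000 in
/-- Every positive-definite Hermitian 2×2 complex matrix with determinant 1 is the
exponential of a real linear combination of Pauli matrices, and explicitly equals
cosh|v|·1 + (sinh|v|/|v|)·(v·σ) when v ≠ 0. -/
theorem hermitian_posDef_det_one_eq_exp_pauli
    (h : Matrix (Fin 2) (Fin 2) ℂ) (hherm : h.IsHermitian) (hpos : h.PosDef)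
    (hdet : h.det = 1) :
    ∃ v : Fin 3 → ℝ,
      h = NormedSpace.exp (∑ a, (v a : ℂ) • pauli a) ∧
      (v ≠ 0 →
        h = (Real.cosh (vnorm v) : ℂ) • (1 : Matrix (Fin 2) (Fin 2) ℂ)
          + ((Real.sinh (vnorm v) / vnorm v : ℝ) : ℂ) • (∑ a, (v a : ℂ) • pauli a)) := by
  set x : ℝ := (h 0 0).re with hx
  set y : ℝ := (h 1 1).re with hy
  set b : ℂ := h 0 1 with hb
  have h00 : h 0 0 = (x : ℂ) := by
    have := hherm.apply 0 0
    have him : (h 0 0).im = 0 := by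
      have := congrArg Complex.im this
      simp at this
      linarith
    exact Complex.ext (by simp [hx]) (by simp [him])
  have h11 : h 1 1 = (y : ℂ) := by
    have := hherm.apply 1 1
    have him : (h 1 1).im = 0 := by
      have := congrArg Complex.im this
      simp at this
      linarith
    exact Complex.ext (by simp [hy]) (by simp [him])
  have h10 : h 1 0 = starRingEnd ℂ b := by
    have := hherm.apply 1 0
    rw [← this]
    rfl
  -- positivity of diagonal entries
  have hxpos : 0 < x := by
    have := hpos.re_dotProduct_pos (x := Pi.single 0 1) (by
      intro hc
      have := congrFun hc 0
      simp at this)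
    simpa [dotProduct, Matrix.mulVec, Fin.sum_univ_two, hx] using this
  have hypos : 0 < y := by
    have := hpos.re_dotProduct_pos (x := Pi.single 1 1) (by
      intro hc
      have := congrFun hc 1
      simp at this)
    simpa [dotProduct, Matrix.mulVec, Fin.sum_univ_two, hy] using this
  -- determinant
  have hdet' : x * y - Complex.normSq b = 1 := by
    have hd := hdet
    rw [Matrix.det_fin_two, h00, h11, h10] at hd
    have : ((x * y - Complex.normSq b : ℝ) : ℂ) = 1 := by
      push_cast
      rw [← hd, Complex.mul_conj]
    exact_mod_cast this
  set β : ℝ := b.re with hβd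
  set γ : ℝ := -b.im with hγd
  set δ : ℝ := (x - y) / 2 with hδd
  set α : ℝ := (x + y) / 2 with hαd
  have hαpos : 0 < α := by rw [hαd]; linarith
  have hnsq : Complex.normSq b = β ^ 2 + γ ^ 2 := by
    rw [Complex.normSq_apply, hβd, hγd]; ring
  have hkey : α ^ 2 = 1 + (β ^ 2 + γ ^ 2 + δ ^ 2) := by
    have h1 : α ^ 2 - δ ^ 2 = x * y := by rw [hαd, hδd]; ring
    nlinarith [hdet', hnsq]
  have hdecomp : h = (α : ℂ) • 1 + ∑ a, ((![β, γ, δ]) a : ℂ) • pauli a := by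
    rw [pauli_sum]
    ext i j
    fin_cases i <;> fin_cases j <;>
      simp [h00, h11, h10, Matrix.one_apply, Complex.ext_iff, hαd, hδd, hβd, hγd, ← hb,
        Complex.conj_re, Complex.conj_im] <;> ring
  rcases eq_or_lt_of_le (show (0:ℝ) ≤ β ^ 2 + γ ^ 2 + δ ^ 2 by positivity) with hr0 | hrpos
  · -- zero case : h = 1
    have hβ0 : β = 0 := by nlinarith [sq_nonneg β, sq_nonneg γ, sq_nonneg δ]
    have hγ0 : γ = 0 := by nlinarith [sq_nonneg β, sq_nonneg γ, sq_nonneg δ]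
    have hδ0 : δ = 0 := by nlinarith [sq_nonneg β, sq_nonneg γ, sq_nonneg δ]
    have hα1 : α = 1 := by nlinarith
    have hone : h = 1 := by
      rw [hdecomp, hα1, hβ0, hγ0, hδ0]
      simp [Fin.sum_univ_three]
    refine ⟨0, ?_, fun hv => absurd rfl hv⟩
    have hsum0 : ∑ a : Fin 3, (((0 : Fin 3 → ℝ) a : ℝ) : ℂ) • pauli a = 0 := by simp
    rw [hsum0, NormedSpace.exp_zero, hone]
  · -- positive case
    set r : ℝ := Real.sqrt (β ^ 2 + γ ^ 2 + δ ^ 2) with hrd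
    have hr : 0 < r := Real.sqrt_pos.mpr hrpos
    have hr2 : r ^ 2 = β ^ 2 + γ ^ 2 + δ ^ 2 := Real.sq_sqrt hrpos.le
    set t : ℝ := Real.arsinh r with htd
    have ht : 0 < t := Real.arsinh_pos_iff.mpr hr
    have hsinh : Real.sinh t = r := Real.sinh_arsinh r
    have hcosh : Real.cosh t = α := by
      have h1 : Real.cosh t ^ 2 = 1 + Real.sinh t ^ 2 := Real.cosh_sq' t
      nlinarith [Real.cosh_pos t, hαpos]
    set v : Fin 3 → ℝ := fun a => (t / r) * (![β, γ, δ]) a with hvd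
    have htr : t / r ≠ 0 := div_ne_zero ht.ne' hr.ne'
    have hvne : v ≠ 0 := by
      intro hc
      have h0 := congrFun hc 0
      have h1 := congrFun hc 1
      have h2 := congrFun hc 2
      simp [hvd, htr] at h0 h1 h2
      nlinarith
    have hN : ∑ a, (v a : ℂ) • pauli a
        = ((t / r : ℝ) : ℂ) • ∑ a, ((![β, γ, δ]) a : ℂ) • pauli a := by
      rw [Finset.smul_sum]
      refine Finset.sum_congr rfl fun a _ => ?_
      rw [hvd]
      push_cast
      rw [smul_smul]
    have hvn : vnorm v = t := by
      rw [vnorm, hvd]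
      have he : (t / r * (![β, γ, δ]) 0) ^ 2 + (t / r * (![β, γ, δ]) 1) ^ 2
          + (t / r * (![β, γ, δ]) 2) ^ 2 = (t / r) ^ 2 * (β ^ 2 + γ ^ 2 + δ ^ 2) := by
        simp [Matrix.cons_val_zero, Matrix.cons_val_one]
        ring
      rw [he, ← hr2, ← mul_pow, Real.sqrt_sq (by positivity), div_mul_cancel₀ _ hr.ne']
    have hsq : (∑ a, (v a : ℂ) • pauli a) ^ 2 = ((t : ℂ)) ^ 2 • 1 := by
      rw [hN, smul_pow, pauli_sum_sq, smul_smul]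
      congr 1
      have he3 : (![β, γ, δ]) 0 ^ 2 + (![β, γ, δ]) 1 ^ 2 + (![β, γ, δ]) 2 ^ 2
          = β ^ 2 + γ ^ 2 + δ ^ 2 := by simp
      rw [he3, ← hr2]
      push_cast
      field_simp
    have hE : (Real.cosh t : ℂ) • (1 : Matrix (Fin 2) (Fin 2) ℂ)
        + ((Real.sinh t / t : ℝ) : ℂ) • ∑ a, (v a : ℂ) • pauli a = h := by
      rw [hN, smul_smul, hcosh, hsinh]
      have : ((r / t : ℝ) : ℂ) * ((t / r : ℝ) : ℂ) = 1 := by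
        push_cast
        field_simp
      rw [this, one_smul, hdecomp]
    refine ⟨v, ?_, fun _ => ?_⟩
    · rw [exp_of_sq _ (t : ℂ) (by exact_mod_cast ht.ne') hsq]
      rw [← Complex.ofReal_cosh, ← hE]
      congr 1
      congr 1
      rw [← Complex.ofReal_sinh]
      push_cast
      ring
    · rw [hvn, hE]
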